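/- In the max-plus semiring, if v is an eigenvector of A with eigenvalue λ (i.e., max_j (A_{ij} + v_j) = λ + v_i for all i, with all v_i finite), then for any cycle i_1 → i_2 → ... → i_k → i_1 in the graph of A, the cycle mean (A_{i_1 i_2} + ... + A_{i_k i_1})/k is at most λ. -/
import Mathlib


/-- In max-plus, if `v` is a finite eigenvector of `A` with eigenvalue `λ`
(`max_j (A i j + v j) = λ + v i` for all `i`), then every cycle
`c 0 → c 1 → ... → c (k-1) → c 0` in the graph of `A` (with real edge weights `w`)
has cycle mean at most `λ`. -/
theorem stmt15 {n : ℕ} (A : Matrix (Fin n) (Fin n) (WithBot ℝ))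
    (lam : ℝ) (v : Fin n → ℝ)
    (heig : ∀ i, (Finset.univ.sup fun j => A i j + (v j : WithBot ℝ))
        = ((lam + v i : ℝ) : WithBot ℝ))
    (k : ℕ) [NeZero k] (c : Fin k → Fin n) (w : Fin k → ℝ)
    (hw : ∀ t : Fin k, A (c t) (c (t + 1)) = (w t : WithBot ℝ)) :
    (∑ t, w t) / k ≤ lam := by
  have key : ∀ t : Fin k, w t + v (c (t + 1)) ≤ lam + v (c t) := by
    intro t
    have h1 : A (c t) (c (t + 1)) + (v (c (t + 1)) : WithBot ℝ)
        ≤ ((lam + v (c t) : ℝ) : WithBot ℝ) := by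
      rw [← heig (c t)]
      exact Finset.le_sup (f := fun j => A (c t) j + (v j : WithBot ℝ)) (Finset.mem_univ (c (t + 1)))
    rw [hw t, ← WithBot.coe_add, WithBot.coe_le_coe] at h1
    exact h1
  have hsum : (∑ t, (w t + v (c (t + 1)))) ≤ ∑ t : Fin k, (lam + v (c t)) :=
    Finset.sum_le_sum fun t _ => key t
  have hperm : (∑ t : Fin k, v (c (t + 1))) = ∑ t : Fin k, v (c t) := by
    exact Fintype.sum_equiv (Equiv.addRight (1 : Fin k)) _ _ (fun t => rfl)
  rw [Finset.sum_add_distrib, Finset.sum_add_distrib, hperm,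
    add_le_add_iff_right, Finset.sum_const, Finset.card_univ, Fintype.card_fin,
    nsmul_eq_mul] at hsum
  have hk : (0 : ℝ) < k := Nat.cast_pos.mpr (Nat.pos_of_ne_zero (NeZero.ne k))
  rw [div_le_iff₀ hk]
  linarith
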